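/- Let V denote ℍ² regarded as a real vector space of dimension 8, and let G be one of the following subsets of Mat₂(ℍ): (a) {B(t) : t ∈ ℝ}; (b) {λ·B(t) : t ∈ ℝ, λ ∈ span_ℝ{1,i}, |λ| = 1}; (c) {q·B(t) : t ∈ ℝ, q ∈ ℍ, |q| = 1}; (d) S_{a,b} := {(cos(bt) + sin(bt)·i)·B(at) : t ∈ ℝ} for some fixed nonzero real numbers a, b. If α : V × V × V → ℝ is ℝ-trilinear and satisfies α(A v₁, A v₂, A v₃) = α(v₁, v₂, v₃) for all A ∈ G and all v₁, v₂, v₃ ∈ V, then α = 0. -/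

import Mathlib

/- Statement 5: trilinear forms on ℍ² invariant under one of the groups
SO⁰(1,1), SO⁰(1,1)·U(1), SO⁰(1,1)·Sp(1), or S_{a,b} vanish. -/

open Quaternion Matrix

noncomputable section

/-- The quaternions over ℝ. -/
abbrev Quat := Quaternion ℝ

/-- The imaginary unit `i` of the quaternions. -/
def qi : Quat := ⟨0, 1, 0, 0⟩

/-- The matrix B(t) = [[cosh t, sinh t],[sinh t, cosh t]]. -/
def Bmat (t : ℝ) : Matrix (Fin 2) (Fin 2) Quat :=
  !![(Real.cosh t : ℝ), (Real.sinh t : ℝ); (Real.sinh t : ℝ), (Real.cosh t : ℝ)]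

/-- (a) The group {B(t) : t ∈ ℝ}, i.e. SO⁰(1,1). -/
def Ga : Set (Matrix (Fin 2) (Fin 2) Quat) :=
  {M | ∃ t : ℝ, M = Bmat t}

/-- (b) The group {λ·B(t)} with λ a unit-norm element of span_ℝ{1,i}. -/
def Gb : Set (Matrix (Fin 2) (Fin 2) Quat) :=
  {M | ∃ t : ℝ, ∃ l : Quat, l.imJ = 0 ∧ l.imK = 0 ∧ ‖l‖ = 1 ∧ M = l • Bmat t}

/-- (c) The group {q·B(t)} with q a unit quaternion. -/
def Gc : Set (Matrix (Fin 2) (Fin 2) Quat) :=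
  {M | ∃ t : ℝ, ∃ q : Quat, ‖q‖ = 1 ∧ M = q • Bmat t}

/-- (d) The one-parameter group S_{a,b} = {(cos(bt) + sin(bt)·i)·B(at) : t ∈ ℝ}. -/
def Sab (a b : ℝ) : Set (Matrix (Fin 2) (Fin 2) Quat) :=
  {M | ∃ t : ℝ, M = (((Real.cos (b * t) : ℝ) : Quat) + ((Real.sin (b * t) : ℝ) : Quat) * qi) • Bmat (a * t)}

lemma mulVec_p (s : ℝ) (x : Quat) :
    (Bmat s).mulVec ![x, x] = Real.exp s • ![x, x] := by
  funext i
  fin_cases i <;>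
    simp [Bmat, Matrix.mulVec, dotProduct, Fin.sum_univ_two,
      ← Quaternion.coe_mul_eq_smul, ← add_mul, ← Quaternion.coe_add, Real.exp_eq_exp_ℝ]

lemma mulVec_m (s : ℝ) (x : Quat) :
    (Bmat s).mulVec ![x, -x] = Real.exp (-s) • ![x, -x] := by
  have h1 : ((Real.cosh s : Quat)) - (Real.sinh s : Quat) = ((Real.exp (-s) : ℝ) : Quat) := by
    rw [← Quaternion.coe_sub, Real.cosh_sub_sinh]
  funext i
  fin_cases i
  · simp [Bmat, Matrix.mulVec, dotProduct, Fin.sum_univ_two,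
      ← Quaternion.coe_mul_eq_smul, mul_neg]
    rw [← sub_eq_add_neg, ← sub_mul, h1]
  · simp [Bmat, Matrix.mulVec, dotProduct, Fin.sum_univ_two,
      ← Quaternion.coe_mul_eq_smul, mul_neg]
    rw [← sub_eq_add_neg, ← sub_mul, ← neg_sub ((Real.cosh s : Quat)), h1, neg_mul]

def Wv : Bool → Quat → (Fin 2 → Quat) := fun b x => if b then ![x, x] else ![x, -x]

lemma mulVec_W (s : ℝ) (b : Bool) (x : Quat) :
    (Bmat s).mulVec (Wv b x) = Real.exp (if b then s else -s) • Wv b x := by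
  cases b <;> simp only [Wv, Bool.false_eq_true, ↓reduceIte, mulVec_m, mulVec_p]

lemma decomp (v : Fin 2 → Quat) :
    v = ((1:ℝ)/2) • Wv true (v 0 + v 1) + ((1:ℝ)/2) • Wv false (v 0 - v 1) := by
  funext i
  fin_cases i <;> simp [Wv] <;> module

lemma key (s : ℝ) (hs : s ≠ 0)
    (α : (Fin 2 → Quat) →ₗ[ℝ] (Fin 2 → Quat) →ₗ[ℝ] (Fin 2 → Quat) →ₗ[ℝ] ℝ)
    (h : ∀ v₁ v₂ v₃, α ((Bmat s).mulVec v₁) ((Bmat s).mulVec v₂) ((Bmat s).mulVec v₃)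
      = α v₁ v₂ v₃) :
    α = 0 := by
  have eig : ∀ (e₁ e₂ e₃ : ℝ) (w₁ w₂ w₃ : Fin 2 → Quat),
      e₁ * e₂ * e₃ ≠ 1 →
      (Bmat s).mulVec w₁ = e₁ • w₁ → (Bmat s).mulVec w₂ = e₂ • w₂ →
      (Bmat s).mulVec w₃ = e₃ • w₃ → α w₁ w₂ w₃ = 0 := by
    intro e₁ e₂ e₃ w₁ w₂ w₃ hne h₁ h₂ h₃
    have hh := h w₁ w₂ w₃
    rw [h₁, h₂, h₃] at hh
    simp only [_root_.map_smul, LinearMap.smul_apply, smul_eq_mul] at hh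
    have h0 : (e₁ * e₂ * e₃ - 1) * α w₁ w₂ w₃ = 0 := by linear_combination hh
    rcases mul_eq_zero.1 h0 with h0 | h0
    · exact absurd (by linarith : e₁ * e₂ * e₃ = 1) hne
    · exact h0
  have hzero : ∀ (b₁ b₂ b₃ : Bool) (x y z : Quat),
      α (Wv b₁ x) (Wv b₂ y) (Wv b₃ z) = 0 := by
    intro b₁ b₂ b₃ x y z
    refine eig _ _ _ _ _ _ ?_ (mulVec_W s b₁ x) (mulVec_W s b₂ y) (mulVec_W s b₃ z)
    rw [← Real.exp_add, ← Real.exp_add]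
    intro hc
    rw [Real.exp_eq_one_iff] at hc
    revert hc
    cases b₁ <;> cases b₂ <;> cases b₃ <;> simp <;> intro hc <;> apply hs <;> linarith
  apply LinearMap.ext; intro v₁
  apply LinearMap.ext; intro v₂
  apply LinearMap.ext; intro v₃
  show α v₁ v₂ v₃ = 0
  rw [decomp v₁, decomp v₂, decomp v₃]
  simp only [map_add, _root_.map_smul, LinearMap.add_apply, LinearMap.smul_apply, hzero,
    smul_eq_mul, mul_zero, add_zero]

theorem invariant_trilinear_forms_vanish_dim8
    (G : Set (Matrix (Fin 2) (Fin 2) Quat))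
    (hG : G = Ga ∨ G = Gb ∨ G = Gc ∨ ∃ a b : ℝ, a ≠ 0 ∧ b ≠ 0 ∧ G = Sab a b)
    (α : (Fin 2 → Quat) →ₗ[ℝ] (Fin 2 → Quat) →ₗ[ℝ] (Fin 2 → Quat) →ₗ[ℝ] ℝ)
    (hinv : ∀ A ∈ G, ∀ v₁ v₂ v₃ : Fin 2 → Quat,
      α (A.mulVec v₁) (A.mulVec v₂) (A.mulVec v₃) = α v₁ v₂ v₃) :
    α = 0 := by
  obtain ⟨s, hs, hmem⟩ : ∃ s : ℝ, s ≠ 0 ∧ Bmat s ∈ G := by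
    rcases hG with h | h | h | ⟨a, b, ha, hb, h⟩
    · exact ⟨1, one_ne_zero, h ▸ ⟨1, rfl⟩⟩
    · refine ⟨1, one_ne_zero, h ▸ ⟨1, 1, ?_, ?_, ?_, ?_⟩⟩ <;>
        simp
    · exact ⟨1, one_ne_zero, h ▸ ⟨1, 1, norm_one, (one_smul _ _).symm⟩⟩
    · refine ⟨a * (2 * Real.pi / b), ?_, h ▸ ⟨2 * Real.pi / b, ?_⟩⟩
      · exact mul_ne_zero ha (div_ne_zero (by positivity) hb)
      · rw [mul_div_cancel₀ _ hb, Real.cos_two_pi, Real.sin_two_pi]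
        simp
  exact key s hs α (hinv (Bmat s) hmem)
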